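/- Let G = PSL₂(q), where q ≡ 1 mod 4 and q = p^k for some k ≥ 1 and odd prime p, and let i ∈ G be an involution. Then the number of involutions j ∈ G such that the product i·j has order p is exactly 2(q−1). -/

import Mathlib

open Matrix

instance : Fact (Even (Fintype.card (Fin 2))) := ⟨1, rfl⟩

/-- `PSL₂(F)`: the quotient of `SL₂(F)` by its center. -/
abbrev PSL2 (F : Type*) [Field F] : Type _ :=
  Matrix.SpecialLinearGroup (Fin 2) F ⧸
    Subgroup.center (Matrix.SpecialLinearGroup (Fin 2) F)

namespace PSL2Count

variable {F : Type*} [Field F]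

local notation "SL2" => Matrix.SpecialLinearGroup (Fin 2) F

lemma SL2_det (A : SL2) : A.1 0 0 * A.1 1 1 - A.1 0 1 * A.1 1 0 = 1 := by
  have := A.2; rwa [Matrix.det_fin_two] at this

lemma center_iff {A : SL2} : A ∈ Subgroup.center SL2 ↔ A = 1 ∨ A = -1 := by
  rw [Matrix.SpecialLinearGroup.mem_center_iff]
  constructor
  · rintro ⟨r, hr, hA⟩
    rw [Fintype.card_fin, pow_two] at hr
    rcases mul_self_eq_one_iff.mp hr with rfl | rfl
    · left; apply Subtype.ext; rw [← hA]; simp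
    · right; apply Subtype.ext
      rw [Matrix.SpecialLinearGroup.coe_neg, ← hA]
      simp only [scalar_apply]
      ext i j
      simp [Matrix.one_apply, Matrix.diagonal_apply]
      split <;> simp
  · rintro (rfl | rfl)
    · exact ⟨1, one_pow _, by simp⟩
    · refine ⟨-1, by simp, ?_⟩
      rw [Matrix.SpecialLinearGroup.coe_neg]
      simp only [scalar_apply]
      ext i j
      simp [Matrix.one_apply, Matrix.diagonal_apply]
      split <;> simp

lemma mk_eq_one {A : SL2} : (QuotientGroup.mk A : PSL2 F) = 1 ↔ A = 1 ∨ A = -1 := by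
  rw [QuotientGroup.eq_one_iff, center_iff]

lemma eq_one_of_entries {A : SL2} (h00 : A.1 0 0 = 1) (h01 : A.1 0 1 = 0)
    (h10 : A.1 1 0 = 0) (h11 : A.1 1 1 = 1) : A = 1 := by
  apply Subtype.ext
  rw [Matrix.eta_fin_two A.1, h00, h01, h10, h11]
  ext i j
  fin_cases i <;> fin_cases j <;> simp

lemma eq_neg_one_of_entries {A : SL2} (h00 : A.1 0 0 = -1) (h01 : A.1 0 1 = 0)
    (h10 : A.1 1 0 = 0) (h11 : A.1 1 1 = -1) : A = -1 := by
  apply Subtype.ext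
  rw [Matrix.SpecialLinearGroup.coe_neg, Matrix.eta_fin_two A.1, h00, h01, h10, h11]
  ext i j
  fin_cases i <;> fin_cases j <;> simp

lemma mul_entry (A B : SL2) (i j : Fin 2) :
    (A * B).1 i j = A.1 i 0 * B.1 0 j + A.1 i 1 * B.1 1 j := by
  rw [Matrix.SpecialLinearGroup.coe_mul, Matrix.mul_apply, Fin.sum_univ_two]

lemma orderOf_mk_eq_two_iff (h2 : (2:F) ≠ 0) (A : SL2) :
    orderOf (QuotientGroup.mk A : PSL2 F) = 2 ↔ A.1 1 1 = -A.1 0 0 := by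
  have hdet := SL2_det A
  constructor
  · intro h
    have hne : (QuotientGroup.mk A : PSL2 F) ≠ 1 := by
      intro heq; rw [heq, orderOf_one] at h; norm_num at h
    have hA1 : ¬(A = 1 ∨ A = -1) := fun hh => hne (mk_eq_one.mpr hh)
    have hsq : (QuotientGroup.mk (A * A) : PSL2 F) = 1 := by
      have := pow_orderOf_eq_one (QuotientGroup.mk A : PSL2 F)
      rw [h, pow_two] at this
      exact this
    rw [mk_eq_one] at hsq
    rcases hsq with hsq | hsq
    · exfalso
      have E : ∀ i j, A.1 i 0 * A.1 0 j + A.1 i 1 * A.1 1 j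
          = (1 : Matrix (Fin 2) (Fin 2) F) i j := by
        intro i j
        rw [← mul_entry, hsq, Matrix.SpecialLinearGroup.coe_one]
      have e00 := E 0 0; have e01 := E 0 1; have e10 := E 1 0; have e11 := E 1 1
      simp [Matrix.one_apply] at e00 e01 e10 e11
      by_cases htr : A.1 0 0 + A.1 1 1 = 0
      · exact h2 (by linear_combination -e00 - hdet + A.1 0 0 * htr)
      · have hb : A.1 0 1 = 0 := by
          rcases mul_eq_zero.mp (show A.1 0 1 * (A.1 0 0 + A.1 1 1) = 0 by
            linear_combination e01) with h' | h'
          · exact h'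
          · exact absurd h' htr
        have hc : A.1 1 0 = 0 := by
          rcases mul_eq_zero.mp (show A.1 1 0 * (A.1 0 0 + A.1 1 1) = 0 by
            linear_combination e10) with h' | h'
          · exact h'
          · exact absurd h' htr
        have had : A.1 0 0 = A.1 1 1 := by
          have : (A.1 0 0 - A.1 1 1) * (A.1 0 0 + A.1 1 1) = 0 := by
            linear_combination e00 - e11
          rcases mul_eq_zero.mp this with h' | h'
          · exact sub_eq_zero.mp h'
          · exact absurd h' htr
        rcases mul_self_eq_one_iff.mp (by linear_combination e00 - A.1 0 1 * hc :
            A.1 0 0 * A.1 0 0 = 1) with h1 | h1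
        · exact hA1 (Or.inl (eq_one_of_entries h1 hb hc (had ▸ h1)))
        · exact hA1 (Or.inr (eq_neg_one_of_entries h1 hb hc (had ▸ h1)))
    · -- A * A = -1
      have E : ∀ i j, A.1 i 0 * A.1 0 j + A.1 i 1 * A.1 1 j
          = (-1 : Matrix (Fin 2) (Fin 2) F) i j := by
        intro i j
        rw [← mul_entry, hsq, Matrix.SpecialLinearGroup.coe_neg,
          Matrix.SpecialLinearGroup.coe_one]
      have e00 := E 0 0; have e01 := E 0 1; have e10 := E 1 0
      simp [Matrix.one_apply] at e00 e01 e10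
      by_cases htr : A.1 0 0 + A.1 1 1 = 0
      · linear_combination htr
      · exfalso
        have hb : A.1 0 1 = 0 := by
          rcases mul_eq_zero.mp (show A.1 0 1 * (A.1 0 0 + A.1 1 1) = 0 by
            linear_combination e01) with h' | h'
          · exact h'
          · exact absurd h' htr
        have hc : A.1 1 0 = 0 := by
          rcases mul_eq_zero.mp (show A.1 1 0 * (A.1 0 0 + A.1 1 1) = 0 by
            linear_combination e10) with h' | h'
          · exact h'
          · exact absurd h' htr
        have hprod : A.1 0 0 * A.1 1 1 = 1 := by linear_combination hdet + A.1 0 1 * hc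
        have ha0 : A.1 0 0 ≠ 0 := left_ne_zero_of_mul_eq_one hprod
        have : A.1 0 0 * (A.1 0 0 + A.1 1 1) = 0 := by
          linear_combination e00 - A.1 0 1 * hc + hprod
        rcases mul_eq_zero.mp this with h' | h'
        · exact ha0 h'
        · exact htr h'
  · intro h
    have hsq : A * A = -1 := by
      apply Subtype.ext
      rw [Matrix.SpecialLinearGroup.coe_mul, Matrix.SpecialLinearGroup.coe_neg,
        Matrix.SpecialLinearGroup.coe_one]
      rw [h] at hdet
      ext i j
      fin_cases i <;> fin_cases j <;>
        simp [Matrix.mul_apply, Fin.sum_univ_two, Matrix.one_apply, h] <;>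
        first | ring1 | linear_combination -hdet
    apply orderOf_eq_prime
    · rw [pow_two, ← QuotientGroup.mk_mul, hsq, mk_eq_one]
      right; rfl
    · rw [Ne, mk_eq_one]
      rintro (rfl | rfl)
      · simp only [Matrix.SpecialLinearGroup.coe_one, Matrix.one_apply] at h
        norm_num at h
        exact h2 (by linear_combination h)
      · simp only [Matrix.SpecialLinearGroup.coe_neg, Matrix.SpecialLinearGroup.coe_one,
          Matrix.neg_apply, Matrix.one_apply] at h
        norm_num at h
        exact h2 (by linear_combination -h)
section CharP

variable (p : ℕ) [hpf : Fact p.Prime] [CharP F p]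

lemma pow_p_eq_scalar (hp2 : p ≠ 2) (M : SL2) (ε : F) (hε : ε * ε = 1) (hεp : ε ^ p = ε)
    (htr : M.1 0 0 + M.1 1 1 = 2 * ε) :
    M.1 ^ p = ε • (1 : Matrix (Fin 2) (Fin 2) F) := by
  have hdet := SL2_det M
  set N : Matrix (Fin 2) (Fin 2) F := M.1 - ε • 1 with hN
  have hN2 : N * N = 0 := by
    ext i j
    fin_cases i <;> fin_cases j <;>
      simp only [hN, Matrix.mul_apply, Fin.sum_univ_two, Matrix.sub_apply, Matrix.smul_apply,
        Matrix.one_apply, Matrix.zero_apply, smul_eq_mul] <;>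
      norm_num
    · linear_combination -hdet + M.1 0 0 * htr + hε
    · linear_combination M.1 0 1 * htr
    · linear_combination M.1 1 0 * htr
    · linear_combination M.1 1 1 * htr - hdet + hε
  have hsplit : M.1 = ε • 1 + N := by rw [hN]; abel
  have h2le : 2 ≤ p := hpf.out.two_le
  have hNp : N ^ p = 0 := by
    rw [show p = (p - 2) + 2 by omega, pow_add, pow_two, hN2, mul_zero]
  calc M.1 ^ p = (ε • 1 + N) ^ p := by rw [← hsplit]
    _ = (ε • (1 : Matrix (Fin 2) (Fin 2) F)) ^ p + N ^ p :=
        add_pow_char_of_commute p ((Commute.one_left N).smul_left ε)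
    _ = ε • 1 := by rw [hNp, add_zero, smul_pow, one_pow, hεp]

lemma orderOf_mk_eq_p_iff (hp2 : p ≠ 2) (M : SL2) :
    orderOf (QuotientGroup.mk M : PSL2 F) = p ↔
      ((M.1 0 0 + M.1 1 1 = 2 ∨ M.1 0 0 + M.1 1 1 = -2) ∧ M ≠ 1 ∧ M ≠ -1) := by
  have hdet := SL2_det M
  have hpodd : Odd p := hpf.out.odd_of_ne_two hp2
  constructor
  · intro h
    have hne : (QuotientGroup.mk M : PSL2 F) ≠ 1 := by
      intro heq; rw [heq, orderOf_one] at h; exact hpf.out.ne_one h.symm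
    have hM : ¬(M = 1 ∨ M = -1) := fun hh => hne (mk_eq_one.mpr hh)
    refine ⟨?_, fun h1 => hM (Or.inl h1), fun h1 => hM (Or.inr h1)⟩
    have hpow : (QuotientGroup.mk (M ^ p) : PSL2 F) = 1 := by
      rw [QuotientGroup.mk_pow, ← h, pow_orderOf_eq_one]
    rw [mk_eq_one] at hpow
    set Q : Matrix (Fin 2) (Fin 2) F := M.1 * M.1 - 1 with hQdef
    have hMp : M.1 ^ p * M.1 ^ p = 1 := by
      rcases hpow with h1 | h1
      · have h2 := congrArg (Subtype.val) h1
        rw [Matrix.SpecialLinearGroup.coe_pow, Matrix.SpecialLinearGroup.coe_one] at h2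
        rw [h2, one_mul]
      · have h2 := congrArg (Subtype.val) h1
        rw [Matrix.SpecialLinearGroup.coe_pow, Matrix.SpecialLinearGroup.coe_neg,
          Matrix.SpecialLinearGroup.coe_one] at h2
        rw [h2, neg_one_mul, neg_neg]
    have hQp : Q ^ p = 0 := by
      have hPp : (M.1 * M.1) ^ p = 1 := by
        rw [Commute.mul_pow (Commute.refl M.1)]; exact hMp
      rw [hQdef, sub_eq_add_neg,
        add_pow_char_of_commute p ((Commute.one_right (M.1 * M.1)).neg_right),
        hPp, hpodd.neg_one_pow]
      exact add_neg_cancel 1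
    have hdetQ : Q 0 0 * Q 1 1 - Q 0 1 * Q 1 0 = 0 := by
      have hd0 : Q.det ^ p = 0 := by rw [← Matrix.det_pow, hQp, Matrix.det_zero]
      have := pow_eq_zero_iff hpf.out.ne_zero |>.mp hd0
      rwa [Matrix.det_fin_two] at this
    have hQQ : Q * Q = (Q 0 0 + Q 1 1) • Q := by
      ext i j
      fin_cases i <;> fin_cases j <;>
        simp only [Matrix.mul_apply, Fin.sum_univ_two, Matrix.smul_apply, smul_eq_mul,
          Fin.mk_zero, Fin.mk_one, Fin.isValue] <;>
        first | ring1 | linear_combination -hdetQ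
    have h2le : 2 ≤ p := hpf.out.two_le
    have key : ∀ n : ℕ, Q ^ (n + 1) = (Q 0 0 + Q 1 1) ^ n • Q := by
      intro n; induction n with
      | zero => simp
      | succ m ih => rw [pow_succ, ih, smul_mul_assoc, hQQ, smul_smul, ← pow_succ]
    have hQ2 : Q * Q = 0 := by
      have h0 : (Q 0 0 + Q 1 1) ^ (p - 1) • Q = 0 := by
        rw [← key, show (p - 1) + 1 = p by omega]; exact hQp
      rcases smul_eq_zero.mp h0 with hs | hQ0
      · rw [hQQ, pow_eq_zero_iff (show p - 1 ≠ 0 by omega) |>.mp hs, zero_smul]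
      · rw [hQ0, mul_zero]
    have E : ∀ i j, Q i 0 * Q 0 j + Q i 1 * Q 1 j = 0 := by
      intro i j
      have h2 := (Matrix.ext_iff.mpr hQ2) i j
      rwa [Matrix.mul_apply, Fin.sum_univ_two, Matrix.zero_apply] at h2
    have q00 : Q 0 0 = M.1 0 0 * M.1 0 0 + M.1 0 1 * M.1 1 0 - 1 := by
      simp [hQdef, Matrix.sub_apply, Matrix.mul_apply, Fin.sum_univ_two, Matrix.one_apply]
    have q01 : Q 0 1 = M.1 0 0 * M.1 0 1 + M.1 0 1 * M.1 1 1 := by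
      simp [hQdef, Matrix.sub_apply, Matrix.mul_apply, Fin.sum_univ_two, Matrix.one_apply]
    have q10 : Q 1 0 = M.1 1 0 * M.1 0 0 + M.1 1 1 * M.1 1 0 := by
      simp [hQdef, Matrix.sub_apply, Matrix.mul_apply, Fin.sum_univ_two, Matrix.one_apply]
    have q11 : Q 1 1 = M.1 1 0 * M.1 0 1 + M.1 1 1 * M.1 1 1 - 1 := by
      simp [hQdef, Matrix.sub_apply, Matrix.mul_apply, Fin.sum_univ_two, Matrix.one_apply]
    have e00 := E 0 0; have e01 := E 0 1; have e10 := E 1 0; have e11 := E 1 1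
    rw [q00, q01, q10] at e00
    rw [q00, q01, q11] at e01
    rw [q10, q00, q11] at e10
    rw [q10, q01, q11] at e11
    by_contra hcon
    push_neg at hcon
    obtain ⟨ht2, ht2'⟩ := hcon
    have htm : (M.1 0 0 + M.1 1 1 - 2) * (M.1 0 0 + M.1 1 1 + 2) ≠ 0 :=
      mul_ne_zero (sub_ne_zero.mpr ht2) (fun hh => ht2' (by linear_combination hh))
    have hb : (M.1 0 0 + M.1 1 1) * M.1 0 1 = 0 := by
      have h1 : (M.1 0 0 + M.1 1 1 - 2) * (M.1 0 0 + M.1 1 1 + 2) *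
          ((M.1 0 0 + M.1 1 1) * M.1 0 1) = 0 := by
        linear_combination e01 + (2 * M.1 0 0 * M.1 0 1 + 2 * M.1 0 1 * M.1 1 1) * hdet
      rcases mul_eq_zero.mp h1 with h' | h'
      · exact absurd h' htm
      · exact h'
    have hc : (M.1 0 0 + M.1 1 1) * M.1 1 0 = 0 := by
      have h1 : (M.1 0 0 + M.1 1 1 - 2) * (M.1 0 0 + M.1 1 1 + 2) *
          ((M.1 0 0 + M.1 1 1) * M.1 1 0) = 0 := by
        linear_combination e10 + (2 * M.1 0 0 * M.1 1 0 + 2 * M.1 1 0 * M.1 1 1) * hdet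
      rcases mul_eq_zero.mp h1 with h' | h'
      · exact absurd h' htm
      · exact h'
    have ha : (M.1 0 0 + M.1 1 1) * M.1 0 0 = 1 := by
      have h1 : (M.1 0 0 + M.1 1 1 - 2) * (M.1 0 0 + M.1 1 1 + 2) *
          ((M.1 0 0 + M.1 1 1) * M.1 0 0 - 1) = 0 := by
        linear_combination e00 + (3 * M.1 0 0 * M.1 0 0 + 3 * M.1 0 0 * M.1 1 1 +
          M.1 1 1 * M.1 1 1 + M.1 0 1 * M.1 1 0 - 3) * hdet
      rcases mul_eq_zero.mp h1 with h' | h'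
      · exact absurd h' htm
      · exact sub_eq_zero.mp h'
    have hd : (M.1 0 0 + M.1 1 1) * M.1 1 1 = 1 := by
      have h1 : (M.1 0 0 + M.1 1 1 - 2) * (M.1 0 0 + M.1 1 1 + 2) *
          ((M.1 0 0 + M.1 1 1) * M.1 1 1 - 1) = 0 := by
        linear_combination e11 + (M.1 0 0 * M.1 0 0 + 3 * M.1 0 0 * M.1 1 1 +
          3 * M.1 1 1 * M.1 1 1 + M.1 0 1 * M.1 1 0 - 3) * hdet
      rcases mul_eq_zero.mp h1 with h' | h'
      · exact absurd h' htm
      · exact sub_eq_zero.mp h'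
    have ht0 : M.1 0 0 + M.1 1 1 ≠ 0 := left_ne_zero_of_mul_eq_one ha
    have hb0 : M.1 0 1 = 0 := by
      rcases mul_eq_zero.mp hb with h' | h'
      · exact absurd h' ht0
      · exact h'
    have hc0 : M.1 1 0 = 0 := by
      rcases mul_eq_zero.mp hc with h' | h'
      · exact absurd h' ht0
      · exact h'
    have had : M.1 0 0 = M.1 1 1 := mul_left_cancel₀ ht0 (ha.trans hd.symm)
    have hsq : M.1 0 0 * M.1 0 0 = 1 := by
      rw [← had] at hdet
      linear_combination hdet + M.1 1 0 * hb0
    rcases mul_self_eq_one_iff.mp hsq with h1 | h1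
    · exact hM (Or.inl (eq_one_of_entries h1 hb0 hc0 (had ▸ h1)))
    · exact hM (Or.inr (eq_neg_one_of_entries h1 hb0 hc0 (had ▸ h1)))
  · rintro ⟨htr, hM1, hM2⟩
    have hMne : (QuotientGroup.mk M : PSL2 F) ≠ 1 := by
      rw [Ne, mk_eq_one]
      rintro (h | h)
      exacts [hM1 h, hM2 h]
    apply orderOf_eq_prime _ hMne
    rcases htr with htr | htr
    · have hMpow := pow_p_eq_scalar p hp2 M 1 (by ring) (one_pow p) (by rw [mul_one]; exact htr)
      have hMp : M ^ p = 1 := by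
        apply Subtype.ext
        rw [Matrix.SpecialLinearGroup.coe_pow, hMpow, one_smul,
          Matrix.SpecialLinearGroup.coe_one]
      rw [← QuotientGroup.mk_pow, hMp, mk_eq_one]
      left; rfl
    · have hMpow := pow_p_eq_scalar p hp2 M (-1) (by ring) (hpodd.neg_one_pow)
        (by rw [htr]; ring)
      have hMp : M ^ p = -1 := by
        apply Subtype.ext
        rw [Matrix.SpecialLinearGroup.coe_pow, hMpow, Matrix.SpecialLinearGroup.coe_neg,
          Matrix.SpecialLinearGroup.coe_one, neg_smul, one_smul]
      rw [← QuotientGroup.mk_pow, hMp, mk_eq_one]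
      right; rfl

end CharP
section Conj

lemma ne_zero_of_sq_neg_one {u : F} (hu : u * u = -1) : u ≠ 0 := by
  intro h
  rw [h, zero_mul] at hu
  exact one_ne_zero (by linear_combination hu : (1 : F) = 0)

def Dmat (u : F) (hu : u * u = -1) : SL2 :=
  ⟨!![u, 0; 0, -u], by rw [Matrix.det_fin_two_of]; linear_combination -hu⟩

def wMat : SL2 := ⟨!![0, 1; -1, 0], by rw [Matrix.det_fin_two_of]; norm_num⟩

lemma wMat_inv : (wMat : SL2)⁻¹ =
    ⟨!![0, -1; 1, 0], by rw [Matrix.det_fin_two_of]; norm_num⟩ := by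
  apply inv_eq_of_mul_eq_one_right
  apply Subtype.ext
  show (!![0, 1; -1, 0] : Matrix (Fin 2) (Fin 2) F) * !![0, -1; 1, 0] = 1
  ext i j
  fin_cases i <;> fin_cases j <;>
    simp only [Matrix.mul_apply, Fin.sum_univ_two, Matrix.of_apply, Matrix.cons_val',
      Matrix.cons_val_zero, Matrix.cons_val_one, Matrix.head_cons, Matrix.empty_val',
      Matrix.cons_val_fin_one, Matrix.head_fin_const, Fin.mk_zero, Fin.mk_one,
      Matrix.one_apply] <;>
    norm_num

lemma conj_of_b_ne_zero {u : F} (hu : u * u = -1) (h2 : (2 : F) ≠ 0) (A : SL2)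
    (htr : A.1 1 1 = -A.1 0 0) (hb : A.1 0 1 ≠ 0) :
    ∃ g : SL2, g * Dmat u hu * g⁻¹ = A := by
  have hdet := SL2_det A
  rw [htr] at hdet
  have hune : u ≠ 0 := ne_zero_of_sq_neg_one hu
  have hne : -(2 * u * A.1 0 1) ≠ 0 :=
    neg_ne_zero.mpr (mul_ne_zero (mul_ne_zero h2 hune) hb)
  obtain ⟨s, hs1⟩ : ∃ s : F, s * -(2 * u * A.1 0 1) = 1 :=
    ⟨(-(2 * u * A.1 0 1))⁻¹, inv_mul_cancel₀ hne⟩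
  set P : SL2 := ⟨!![A.1 0 1, s * A.1 0 1; u - A.1 0 0, s * (-u - A.1 0 0)], by
    rw [Matrix.det_fin_two_of]; linear_combination hs1⟩ with hP
  refine ⟨P, ?_⟩
  have hmul : A * P = P * Dmat u hu := by
    apply Subtype.ext
    rw [Matrix.SpecialLinearGroup.coe_mul, Matrix.SpecialLinearGroup.coe_mul]
    ext i j
    fin_cases i <;> fin_cases j <;>
      simp only [hP, Dmat, Matrix.mul_apply, Fin.sum_univ_two, Matrix.of_apply,
        Matrix.cons_val', Matrix.cons_val_zero, Matrix.cons_val_one, Matrix.head_cons,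
        Matrix.empty_val', Matrix.cons_val_fin_one, Matrix.head_fin_const, Fin.mk_zero,
        Fin.mk_one, htr] <;>
      first | ring1 | linear_combination -hdet - hu | linear_combination (-s) * hdet - s * hu
  rw [← hmul, mul_inv_cancel_right]

lemma exists_conj {u : F} (hu : u * u = -1) (h2 : (2 : F) ≠ 0) (A : SL2)
    (htr : A.1 1 1 = -A.1 0 0) :
    ∃ g : SL2, g * Dmat u hu * g⁻¹ = A := by
  have hdet := SL2_det A
  have hune : u ≠ 0 := ne_zero_of_sq_neg_one hu
  by_cases hb : A.1 0 1 ≠ 0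
  · exact conj_of_b_ne_zero hu h2 A htr hb
  push_neg at hb
  by_cases hc : A.1 1 0 ≠ 0
  · set A' : SL2 := wMat * A * (wMat : SL2)⁻¹ with hA'
    have hA'c : (A' : SL2).1 = !![A.1 1 1, -A.1 1 0; -A.1 0 1, A.1 0 0] := by
      rw [hA', wMat_inv]
      show (wMat : SL2).1 * A.1 * !![0, -1; 1, 0] = _
      ext i j
      fin_cases i <;> fin_cases j <;>
        simp only [wMat, Matrix.mul_apply, Fin.sum_univ_two, Matrix.of_apply,
          Matrix.cons_val', Matrix.cons_val_zero, Matrix.cons_val_one, Matrix.head_cons,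
          Matrix.empty_val', Matrix.cons_val_fin_one, Matrix.head_fin_const, Fin.mk_zero,
          Fin.mk_one] <;>
        ring1
    have htr' : A'.1 1 1 = -A'.1 0 0 := by
      rw [hA'c]
      simp only [Matrix.of_apply, Matrix.cons_val', Matrix.cons_val_zero, Matrix.cons_val_one,
        Matrix.head_cons, Matrix.empty_val', Matrix.cons_val_fin_one, Matrix.head_fin_const]
      rw [htr]
      ring
    have hb' : A'.1 0 1 ≠ 0 := by
      rw [hA'c]
      simp only [Matrix.of_apply, Matrix.cons_val', Matrix.cons_val_zero, Matrix.cons_val_one,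
        Matrix.head_cons, Matrix.empty_val', Matrix.cons_val_fin_one, Matrix.head_fin_const]
      simpa using hc
    obtain ⟨g, hg⟩ := conj_of_b_ne_zero hu h2 A' htr' hb'
    refine ⟨(wMat : SL2)⁻¹ * g, ?_⟩
    have h1 : (wMat : SL2)⁻¹ * (g * Dmat u hu * g⁻¹) * wMat = A := by
      rw [hg, hA']
      group
    calc (wMat : SL2)⁻¹ * g * Dmat u hu * ((wMat : SL2)⁻¹ * g)⁻¹
        = (wMat : SL2)⁻¹ * (g * Dmat u hu * g⁻¹) * wMat := by group
      _ = A := h1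
  · push_neg at hc
    rw [htr, hb, hc] at hdet
    have ha2 : A.1 0 0 * A.1 0 0 = -1 := by linear_combination -hdet
    have hcase : (A.1 0 0 - u) * (A.1 0 0 + u) = 0 := by linear_combination ha2 - hu
    rcases mul_eq_zero.mp hcase with h' | h'
    · refine ⟨1, ?_⟩
      rw [one_mul, inv_one, mul_one]
      apply Subtype.ext
      have hau : A.1 0 0 = u := sub_eq_zero.mp h'
      show (Dmat u hu).1 = A.1
      rw [Matrix.eta_fin_two A.1, hau, hb, hc, htr, hau]
      rfl
    · have hau : A.1 0 0 = -u := by linear_combination h'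
      refine ⟨wMat, ?_⟩
      apply Subtype.ext
      rw [wMat_inv]
      show (wMat : SL2).1 * (Dmat u hu).1 * !![0, -1; 1, 0] = A.1
      ext i j
      rw [Matrix.eta_fin_two A.1, hau, hb, hc, htr, hau]
      fin_cases i <;> fin_cases j <;>
        simp only [wMat, Dmat, Matrix.mul_apply, Fin.sum_univ_two, Matrix.of_apply,
          Matrix.cons_val', Matrix.cons_val_zero, Matrix.cons_val_one, Matrix.head_cons,
          Matrix.empty_val', Matrix.cons_val_fin_one, Matrix.head_fin_const, Fin.mk_zero,
          Fin.mk_one] <;>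
        ring1

end Conj
section Count

def Bmat (u : F) (hu : u * u = -1) (v : F × F) (hv : v.1 * v.2 = 0) : SL2 :=
  ⟨!![-u, v.1; v.2, u], by rw [Matrix.det_fin_two_of]; linear_combination -hu - hv⟩

open scoped Classical in
noncomputable def fB (u : F) (hu : u * u = -1) : F × F → PSL2 F := fun v =>
  if h : v.1 * v.2 = 0 then (QuotientGroup.mk (Bmat u hu v h) : PSL2 F) else 1

lemma fB_of_eq {u : F} (hu : u * u = -1) (v : F × F) (hv : v.1 * v.2 = 0) :
    fB u hu v = QuotientGroup.mk (Bmat u hu v hv) := by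
  rw [fB, dif_pos hv]

lemma mk_neg (B : SL2) : (QuotientGroup.mk (-B) : PSL2 F) = QuotientGroup.mk B := by
  have h1 : (-B) = B * (-1) := by rw [mul_neg, mul_one]
  have h2 : (QuotientGroup.mk (-1 : SL2) : PSL2 F) = 1 := mk_eq_one.mpr (Or.inr rfl)
  rw [h1, QuotientGroup.mk_mul, h2, mul_one]

lemma Bmat_entries {u : F} (hu : u * u = -1) (v : F × F) (hv : v.1 * v.2 = 0) :
    (Bmat u hu v hv).1 0 0 = -u ∧ (Bmat u hu v hv).1 0 1 = v.1 ∧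
      (Bmat u hu v hv).1 1 0 = v.2 ∧ (Bmat u hu v hv).1 1 1 = u := by
  refine ⟨?_, ?_, ?_, ?_⟩ <;> simp [Bmat]

lemma Dmat_mul_entries {u : F} (hu : u * u = -1) (B : SL2) :
    (Dmat u hu * B).1 0 0 = u * B.1 0 0 ∧ (Dmat u hu * B).1 0 1 = u * B.1 0 1 ∧
      (Dmat u hu * B).1 1 0 = -(u * B.1 1 0) ∧ (Dmat u hu * B).1 1 1 = -(u * B.1 1 1) := by
  refine ⟨?_, ?_, ?_, ?_⟩ <;> rw [mul_entry] <;> simp [Dmat]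

section WithP

variable (p : ℕ) [hpf : Fact p.Prime] [CharP F p]

lemma set_eq (hp2 : p ≠ 2) (h2 : (2 : F) ≠ 0) (u : F) (hu : u * u = -1) :
    {j : PSL2 F | orderOf j = 2 ∧ orderOf ((QuotientGroup.mk (Dmat u hu) : PSL2 F) * j) = p}
      = fB u hu '' {v : F × F | v.1 * v.2 = 0 ∧ v ≠ 0} := by
  have hune : u ≠ 0 := ne_zero_of_sq_neg_one hu
  ext j
  simp only [Set.mem_setOf_eq, Set.mem_image]
  constructor
  · rintro ⟨hj2, hjp⟩
    obtain ⟨B, rfl⟩ := QuotientGroup.mk_surjective j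
    have hdetB := SL2_det B
    have htrB := (orderOf_mk_eq_two_iff h2 B).mp hj2
    have hDB : orderOf (QuotientGroup.mk (Dmat u hu * B) : PSL2 F) = p := by
      rw [QuotientGroup.mk_mul]; exact hjp
    rw [orderOf_mk_eq_p_iff p hp2] at hDB
    obtain ⟨htr, hne1, hne2⟩ := hDB
    obtain ⟨h00, h01, h10, h11⟩ := Dmat_mul_entries hu B
    rw [h00, h11, htrB] at htr
    rw [htrB] at hdetB
    rcases htr with htr | htr
    · -- u * B00 + -(u * -B00) = 2, so B00 = -u
      have hx : B.1 0 0 = -u := by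
        have hh : (2 : F) * (u * B.1 0 0 - 1) = 0 := by linear_combination htr
        rcases mul_eq_zero.mp hh with h' | h'
        · exact absurd h' h2
        · have hux : u * B.1 0 0 = 1 := by linear_combination h'
          exact mul_left_cancel₀ hune (by linear_combination hux + hu)
      rw [hx] at hdetB
      have hyz : B.1 0 1 * B.1 1 0 = 0 := by linear_combination -hdetB - hu
      have hvne : ((B.1 0 1, B.1 1 0) : F × F) ≠ 0 := by
        intro hv0
        have hy : B.1 0 1 = 0 := congrArg Prod.fst hv0
        have hz : B.1 1 0 = 0 := congrArg Prod.snd hv0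
        apply hne1
        apply eq_one_of_entries
        · rw [h00, hx]; linear_combination -hu
        · rw [h01, hy, mul_zero]
        · rw [h10, hz, mul_zero, neg_zero]
        · rw [h11, htrB, hx]; linear_combination -hu
      refine ⟨(B.1 0 1, B.1 1 0), ⟨hyz, hvne⟩, ?_⟩
      rw [fB_of_eq hu _ hyz]
      congr 1
      apply Subtype.ext
      show (!![-u, B.1 0 1; B.1 1 0, u] : Matrix (Fin 2) (Fin 2) F) = B.1
      conv_rhs => rw [Matrix.eta_fin_two B.1]
      rw [hx, htrB, hx, neg_neg]
    · -- u * B00 + -(u * -B00) = -2, so B00 = u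
      have hx : B.1 0 0 = u := by
        have hh : (2 : F) * (u * B.1 0 0 + 1) = 0 := by linear_combination htr
        rcases mul_eq_zero.mp hh with h' | h'
        · exact absurd h' h2
        · have hux : u * B.1 0 0 = -1 := by linear_combination h'
          exact mul_left_cancel₀ hune (by linear_combination hux - hu)
      rw [hx] at hdetB
      have hyz : B.1 0 1 * B.1 1 0 = 0 := by linear_combination -hdetB - hu
      have hvne : ((-B.1 0 1, -B.1 1 0) : F × F) ≠ 0 := by
        intro hv0
        have hy : -B.1 0 1 = 0 := congrArg Prod.fst hv0
        have hz : -B.1 1 0 = 0 := congrArg Prod.snd hv0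
        apply hne2
        apply eq_neg_one_of_entries
        · rw [h00, hx]; linear_combination hu
        · rw [h01, neg_eq_zero.mp hy, mul_zero]
        · rw [h10, neg_eq_zero.mp hz, mul_zero, neg_zero]
        · rw [h11, htrB, hx]; linear_combination hu
      refine ⟨(-B.1 0 1, -B.1 1 0), ⟨by linear_combination hyz, hvne⟩, ?_⟩
      rw [fB_of_eq hu _ (by linear_combination hyz : (-B.1 0 1) * (-B.1 1 0) = 0)]
      rw [show Bmat u hu (-B.1 0 1, -B.1 1 0) (by linear_combination hyz) = -B from ?_, mk_neg]
      apply Subtype.ext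
      rw [Matrix.SpecialLinearGroup.coe_neg]
      show (!![-u, -B.1 0 1; -B.1 1 0, u] : Matrix (Fin 2) (Fin 2) F) = -B.1
      conv_rhs => rw [Matrix.eta_fin_two B.1]
      rw [hx, htrB, hx]
      ext i j
      fin_cases i <;> fin_cases j <;> simp
  · rintro ⟨v, ⟨hv0, hvne⟩, rfl⟩
    rw [fB_of_eq hu v hv0]
    obtain ⟨b00, b01, b10, b11⟩ := Bmat_entries hu v hv0
    obtain ⟨h00, h01, h10, h11⟩ := Dmat_mul_entries hu (Bmat u hu v hv0)
    constructor
    · apply (orderOf_mk_eq_two_iff h2 _).mpr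
      rw [b00, b11, neg_neg]
    · rw [← QuotientGroup.mk_mul]
      apply (orderOf_mk_eq_p_iff p hp2 _).mpr
      refine ⟨Or.inl ?_, ?_, ?_⟩
      · rw [h00, h11, b00, b11]; linear_combination -2 * hu
      · intro h1
        apply hvne
        have e01 := congrArg (fun X : SL2 => X.1 0 1) h1
        have e10 := congrArg (fun X : SL2 => X.1 1 0) h1
        simp only [Matrix.SpecialLinearGroup.coe_one, Matrix.one_apply] at e01 e10
        rw [h01, b01] at e01
        rw [h10, b10] at e10
        norm_num at e01 e10
        have hv1 : v.1 = 0 := by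
          rcases e01 with h' | h'
          · exact absurd h' hune
          · exact h'
        have hv2 : v.2 = 0 := by
          rcases e10 with h' | h'
          · exact absurd h' hune
          · exact h'
        ext
        · exact hv1
        · exact hv2
      · intro h1
        have e00 := congrArg (fun X : SL2 => X.1 0 0) h1
        simp only [Matrix.SpecialLinearGroup.coe_neg, Matrix.SpecialLinearGroup.coe_one,
          Matrix.neg_apply, Matrix.one_apply] at e00
        rw [h00, b00] at e00
        norm_num at e00
        exact h2 (by linear_combination hu - e00)

lemma injOn_fB (h2 : (2 : F) ≠ 0) (u : F) (hu : u * u = -1) :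
    Set.InjOn (fB u hu) {v : F × F | v.1 * v.2 = 0 ∧ v ≠ 0} := by
  have hune : u ≠ 0 := ne_zero_of_sq_neg_one hu
  rintro v ⟨hv0, -⟩ v' ⟨hv0', -⟩ heq
  rw [fB_of_eq hu v hv0, fB_of_eq hu v' hv0'] at heq
  rw [QuotientGroup.eq] at heq
  rw [center_iff] at heq
  obtain ⟨b00, b01, b10, b11⟩ := Bmat_entries hu v hv0
  obtain ⟨c00, c01, c10, c11⟩ := Bmat_entries hu v' hv0'
  rcases heq with h | h
  · have hBB : Bmat u hu v hv0 = Bmat u hu v' hv0' := (inv_mul_eq_one.mp h)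
    have e01 := congrArg (fun X : SL2 => X.1 0 1) hBB
    have e10 := congrArg (fun X : SL2 => X.1 1 0) hBB
    rw [b01, c01] at e01
    rw [b10, c10] at e10
    ext
    · exact e01
    · exact e10
  · exfalso
    have hBB : Bmat u hu v' hv0' = -Bmat u hu v hv0 := by
      have := eq_mul_of_inv_mul_eq h
      rwa [mul_neg, mul_one] at this
    have e00 := congrArg (fun X : SL2 => X.1 0 0) hBB
    simp only [Matrix.SpecialLinearGroup.coe_neg, Matrix.neg_apply] at e00
    rw [c00, b00] at e00
    have hu20 : (2 : F) * u = 0 := by linear_combination -e00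
    rcases mul_eq_zero.mp hu20 with h' | h'
    · exact h2 h'
    · exact hune h'

end WithP

end Count
lemma ne_zero_ncard [Fintype F] : ({y : F | y ≠ 0}).ncard = Fintype.card F - 1 := by
  have h1 : {y : F | y ≠ 0} = Set.univ \ {0} := by ext; simp
  rw [h1, Set.ncard_diff_singleton_of_mem (Set.mem_univ _), Set.ncard_univ,
    Nat.card_eq_fintype_card]

lemma V_ncard [Fintype F] :
    ({v : F × F | v.1 * v.2 = 0 ∧ v ≠ 0}).ncard = 2 * (Fintype.card F - 1) := by
  have hset : {v : F × F | v.1 * v.2 = 0 ∧ v ≠ 0}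
      = (fun y : F => ((0 : F), y)) '' {y : F | y ≠ 0}
        ∪ (fun x : F => (x, (0 : F))) '' {x : F | x ≠ 0} := by
    ext ⟨x, y⟩
    simp only [Set.mem_setOf_eq, Set.mem_union, Set.mem_image, Prod.mk.injEq]
    constructor
    · rintro ⟨hxy, hne⟩
      rcases mul_eq_zero.mp hxy with h | h
      · subst h
        exact Or.inl ⟨y, fun hy0 => hne (by rw [hy0]; rfl), rfl, rfl⟩
      · subst h
        exact Or.inr ⟨x, fun hx0 => hne (by rw [hx0]; rfl), rfl, rfl⟩
    · rintro (⟨z, hz, hzx, hzy⟩ | ⟨z, hz, hzx, hzy⟩)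
      · refine ⟨by rw [← hzx]; exact zero_mul _, fun h0 => ?_⟩
        exact hz (hzy.trans (congrArg Prod.snd h0))
      · refine ⟨by rw [← hzy]; exact mul_zero _, fun h0 => ?_⟩
        exact hz (hzx.trans (congrArg Prod.fst h0))
  have hdisj : Disjoint ((fun y : F => ((0 : F), y)) '' {y : F | y ≠ 0})
      ((fun x : F => (x, (0 : F))) '' {x : F | x ≠ 0}) := by
    rw [Set.disjoint_left]
    rintro v ⟨z, hz, rfl⟩ ⟨w, hw, hweq⟩
    exact hz (congrArg Prod.snd hweq).symm
  rw [hset, Set.ncard_union_eq hdisj (Set.toFinite _) (Set.toFinite _),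
    Set.ncard_image_of_injective _ (fun a b h => by simpa using h : Function.Injective
      (fun y : F => ((0 : F), y))),
    Set.ncard_image_of_injective _ (fun a b h => by simpa using h : Function.Injective
      (fun x : F => (x, (0 : F)))),
    ne_zero_ncard]
  ring

end PSL2Count

/-- Let `G = PSL₂(q)`, `q ≡ 1 mod 4`, `q = p^k`, `p` an odd prime,
`k ≥ 1`, and let `i ∈ G` be an involution.  Then the number of involutions `j ∈ G`
with `i·j` of order `p` is exactly `2(q-1)`. -/
theorem card_involutions_with_unipotent_product (p k q : ℕ) (hp : p.Prime) (hpodd : Odd p)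
    (hk : 1 ≤ k) (hq : q = p ^ k) (hq4 : q % 4 = 1)
    (F : Type*) [Field F] [Fintype F] (hF : Fintype.card F = q)
    (i : PSL2 F) (hi : orderOf i = 2) :
    Set.ncard {j : PSL2 F | orderOf j = 2 ∧ orderOf (i * j) = p} = 2 * (q - 1) := by
  haveI : Fact p.Prime := ⟨hp⟩
  have hp2 : p ≠ 2 := by
    intro h
    rw [h, Nat.odd_iff] at hpodd
    norm_num at hpodd
  -- char F = p
  have hrp : (ringChar F).Prime := CharP.char_is_prime F (ringChar F)
  obtain ⟨n, -, hcard⟩ := FiniteField.card F (ringChar F)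
  have hring : ringChar F = p := by
    have hdvd : ringChar F ∣ p ^ k := by
      rw [← hq, ← hF, hcard]
      exact dvd_pow_self _ n.ne_zero
    exact (Nat.prime_dvd_prime_iff_eq hrp hp).mp (hrp.dvd_of_dvd_pow hdvd)
  haveI : CharP F p := hring ▸ ringChar.charP F
  have h2 : (2 : F) ≠ 0 := by
    intro h
    have h' : ((2 : ℕ) : F) = 0 := by exact_mod_cast h
    have := (CharP.cast_eq_zero_iff F p 2).mp h'
    exact hp2 ((Nat.prime_dvd_prime_iff_eq hp Nat.prime_two).mp this)
  -- -1 is a square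
  have hsq : IsSquare (-1 : F) := by
    rw [FiniteField.isSquare_iff (by rw [hring]; exact hp2) (neg_ne_zero.mpr one_ne_zero), hF]
    have hdiv : q / 2 = 2 * (q / 4) := by omega
    rw [hdiv, pow_mul, neg_one_sq, one_pow]
  obtain ⟨u, hu'⟩ := hsq
  have hu : u * u = -1 := hu'.symm
  obtain ⟨A, rfl⟩ := QuotientGroup.mk_surjective i
  have htrA := (PSL2Count.orderOf_mk_eq_two_iff h2 A).mp hi
  obtain ⟨g, hg⟩ := PSL2Count.exists_conj hu h2 A htrA
  set γ : PSL2 F := (QuotientGroup.mk g : PSL2 F) with hγdef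
  have hγ : (QuotientGroup.mk A : PSL2 F)
      = γ * QuotientGroup.mk (PSL2Count.Dmat u hu) * γ⁻¹ := by
    rw [← hg, QuotientGroup.mk_mul, QuotientGroup.mk_mul, QuotientGroup.mk_inv]
  have horder : ∀ (y x : PSL2 F), orderOf (y * x * y⁻¹) = orderOf x := by
    intro y x
    rw [show y * x * y⁻¹ = (MulAut.conj y) x from rfl]
    exact orderOf_injective (MulAut.conj y).toMonoidHom (MulEquiv.injective _) x
  have hset : {j : PSL2 F | orderOf j = 2 ∧ orderOf ((QuotientGroup.mk A : PSL2 F) * j) = p}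
      = (fun x => γ * x * γ⁻¹) ''
        {j : PSL2 F | orderOf j = 2 ∧
          orderOf ((QuotientGroup.mk (PSL2Count.Dmat u hu) : PSL2 F) * j) = p} := by
    ext j
    simp only [Set.mem_setOf_eq, Set.mem_image]
    constructor
    · rintro ⟨hj2, hjp⟩
      refine ⟨γ⁻¹ * j * γ, ⟨?_, ?_⟩, ?_⟩
      · rw [show γ⁻¹ * j * γ = γ⁻¹ * j * γ⁻¹⁻¹ by rw [inv_inv], horder]
        exact hj2
      · have heq : (QuotientGroup.mk (PSL2Count.Dmat u hu) : PSL2 F) * (γ⁻¹ * j * γ)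
            = γ⁻¹ * ((QuotientGroup.mk A : PSL2 F) * j) * γ⁻¹⁻¹ := by
          rw [hγ]; group
        rw [heq, horder]
        exact hjp
      · group
    · rintro ⟨x, ⟨hx2, hxp⟩, rfl⟩
      refine ⟨by rw [horder]; exact hx2, ?_⟩
      have heq : (QuotientGroup.mk A : PSL2 F) * (γ * x * γ⁻¹)
          = γ * ((QuotientGroup.mk (PSL2Count.Dmat u hu) : PSL2 F) * x) * γ⁻¹ := by
        rw [hγ]; group
      rw [heq, horder]
      exact hxp
  have hinj : Function.Injective (fun x : PSL2 F => γ * x * γ⁻¹) := by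
    intro a b hab
    dsimp only at hab
    have h1 : γ⁻¹ * (γ * a * γ⁻¹) * γ = γ⁻¹ * (γ * b * γ⁻¹) * γ := by
      rw [hab]
    group at h1
    exact h1
  rw [hset, Set.ncard_image_of_injective _ hinj, PSL2Count.set_eq p hp2 h2 u hu,
    Set.ncard_image_of_injOn (PSL2Count.injOn_fB h2 u hu), PSL2Count.V_ncard, hF]
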